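/- Let k ≥ 1, let m : ℝ → ℝ^(2k) be the moment curve m(t) = (t, t², …, t^(2k)), and let P, Q ⊂ ℝ be disjoint (k+1)-element sets that do NOT alternate. Then there exists an affine hyperplane in ℝ^(2k) strictly separating conv(m(P)) from conv(m(Q)); in particular conv(m(P)) ∩ conv(m(Q)) = ∅. -/

import Mathlib

/-- The moment curve `t ↦ (t, t², …, t^d)` in `ℝ^d`. -/
def moment (d : ℕ) : ℝ → (Fin d → ℝ) := fun t i => t ^ ((i : ℕ) + 1)

/-- Two finite subsets `P = {s₁ < s₂ < … < s_p}` and `Q = {t₁ < t₂ < … < t_p}` of a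
linear order alternate if either `s₁ < t₁ < s₂ < t₂ < … < s_p < t_p` or
`t₁ < s₁ < t₂ < s₂ < … < t_p < s_p`. -/
def Alternates {α : Type*} [LinearOrder α] (P Q : Finset α) : Prop :=
  ∃ (p : ℕ) (f g : Fin p → α), StrictMono f ∧ StrictMono g ∧
    Set.range f = (P : Set α) ∧ Set.range g = (Q : Set α) ∧
    (((∀ i : Fin p, f i < g i) ∧ ∀ i j : Fin p, (i : ℕ) + 1 = (j : ℕ) → g i < f j) ∨
      ((∀ i : Fin p, g i < f i) ∧ ∀ i j : Fin p, (i : ℕ) + 1 = (j : ℕ) → f i < g j))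

lemma aux_lin (d : ℕ) (n : Fin d → ℝ) :
    IsLinearMap ℝ (fun x : Fin d → ℝ => ∑ i, n i * x i) := by
  constructor
  · intro x y; simp [Pi.add_apply, mul_add, Finset.sum_add_distrib]
  · intro c x
    simp only [Pi.smul_apply, smul_eq_mul, Finset.mul_sum]
    exact Finset.sum_congr rfl fun i _ => by ring

lemma aux_hull_lt {d : ℕ} (n : Fin d → ℝ) (c : ℝ) (s : Set (Fin d → ℝ))
    (h : ∀ x ∈ s, ∑ i, n i * x i < c) :
    ∀ x ∈ convexHull ℝ s, ∑ i, n i * x i < c := fun x hx =>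
  convexHull_min (fun y hy => h y hy) (convex_halfSpace_lt (aux_lin d n) c) hx

lemma aux_hull_gt {d : ℕ} (n : Fin d → ℝ) (c : ℝ) (s : Set (Fin d → ℝ))
    (h : ∀ x ∈ s, c < ∑ i, n i * x i) :
    ∀ x ∈ convexHull ℝ s, c < ∑ i, n i * x i := fun x hx =>
  convexHull_min (fun y hy => h y hy) (convex_halfSpace_gt (aux_lin d n) c) hx

lemma aux_prod_neg {α : Type*} {s : Finset α} (f : α → ℝ) :
    ∏ i ∈ s, (-(f i)) = (-1)^s.card * ∏ i ∈ s, f i := by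
  rw [← Finset.prod_const (b := (-1:ℝ)), ← Finset.prod_mul_distrib]
  simp

lemma aux_range {p : ℕ} (f : Fin p → ℝ) (S : Finset ℝ) (hf : Function.Injective f)
    (hsub : ∀ i, f i ∈ S) (hcard : S.card = p) : Set.range f = (S : Set ℝ) := by
  have himg : Finset.image f Finset.univ = S := by
    apply Finset.eq_of_subset_of_card_le
    · intro x hx; obtain ⟨i, _, rfl⟩ := Finset.mem_image.1 hx; exact hsub i
    · rw [Finset.card_image_of_injective _ hf, Finset.card_univ, Fintype.card_fin, hcard]
  rw [← himg, Finset.coe_image, Finset.coe_univ, Set.image_univ]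

lemma aux_alt (k : ℕ) (P Q : Finset ℝ) (hPQ : Disjoint P Q)
    (hP : P.card = k+1) (hQ : Q.card = k+1)
    (w : Fin (2*k+2) → ℝ) (hw : StrictMono w)
    (hU : ∀ j, w j ∈ P ∪ Q)
    (hd : ∀ i : Fin (2*k+1), ¬(w i.castSucc ∈ P ↔ w i.succ ∈ P)) :
    Alternates P Q := by
  have hQiff : ∀ j, w j ∈ Q ↔ ¬ w j ∈ P := by
    intro j
    rcases Finset.mem_union.1 (hU j) with h | h
    · simp [h, Finset.disjoint_left.1 hPQ h]
    · simp [h, Finset.disjoint_right.1 hPQ h]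
  have key : ∀ j (hj : j < 2*k+2), (w ⟨j,hj⟩ ∈ P ↔ (Even j ↔ w 0 ∈ P)) := by
    intro j
    induction j with
    | zero =>
      intro hj
      rw [show (⟨0,hj⟩ : Fin (2*k+2)) = 0 from Fin.ext (by simp)]
      simp
    | succ j ih =>
      intro hj
      have hj' : j < 2*k+2 := by omega
      have hj1 : j < 2*k+1 := by omega
      have hdj := hd ⟨j, hj1⟩
      have hcs : (⟨j, hj1⟩ : Fin (2*k+1)).castSucc = ⟨j, hj'⟩ := rfl
      have hsu : (⟨j, hj1⟩ : Fin (2*k+1)).succ = ⟨j+1, hj⟩ := rfl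
      rw [hcs, hsu] at hdj
      have := ih hj'
      rw [Nat.even_add_one]
      tauto
  by_cases h0 : w 0 ∈ P
  · refine ⟨k+1, (fun i => w ⟨2*i, by omega⟩), (fun i => w ⟨2*i+1, by omega⟩),
      ?_, ?_, ?_, ?_, Or.inl ⟨?_, ?_⟩⟩
    · intro a b hab; exact hw (by rw [Fin.mk_lt_mk]; exact by have := hab; omega)
    · intro a b hab; exact hw (by rw [Fin.mk_lt_mk]; exact by have := hab; omega)
    · refine aux_range _ _ (fun a b hab => ?_) (fun i => ?_) hP
      · have h2 := hw.injective hab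
        rw [Fin.mk.injEq] at h2
        exact Fin.ext (by omega)
      · exact (key (2*i) (by omega)).2 (by simp [h0, Nat.even_mul])
    · refine aux_range _ _ (fun a b hab => ?_) (fun i => ?_) hQ
      · have h2 := hw.injective hab
        rw [Fin.mk.injEq] at h2
        exact Fin.ext (by omega)
      · refine (hQiff _).2 ?_
        intro hmem
        have := (key (2*i+1) (by omega)).1 hmem
        simp [h0, Nat.even_add_one, Nat.even_mul] at this
    · intro i; exact hw (by rw [Fin.mk_lt_mk]; omega)
    · intro i j hij; exact hw (by rw [Fin.mk_lt_mk]; omega)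
  · refine ⟨k+1, (fun i => w ⟨2*i+1, by omega⟩), (fun i => w ⟨2*i, by omega⟩),
      ?_, ?_, ?_, ?_, Or.inr ⟨?_, ?_⟩⟩
    · intro a b hab; exact hw (by rw [Fin.mk_lt_mk]; exact by have := hab; omega)
    · intro a b hab; exact hw (by rw [Fin.mk_lt_mk]; exact by have := hab; omega)
    · refine aux_range _ _ (fun a b hab => ?_) (fun i => ?_) hP
      · have h2 := hw.injective hab
        rw [Fin.mk.injEq] at h2
        exact Fin.ext (by omega)
      · refine (key (2*i+1) (by omega)).2 (by simp [h0, Nat.even_add_one, Nat.even_mul])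
    · refine aux_range _ _ (fun a b hab => ?_) (fun i => ?_) hQ
      · have h2 := hw.injective hab
        rw [Fin.mk.injEq] at h2
        exact Fin.ext (by omega)
      · refine (hQiff _).2 ?_
        intro hmem
        have := (key (2*i) (by omega)).1 hmem
        simp [h0, Nat.even_mul] at this
    · intro i; exact hw (by rw [Fin.mk_lt_mk]; omega)
    · intro i j hij; exact hw (by rw [Fin.mk_lt_mk]; omega)

set_option maxHeartbeats 1600000 in
theorem stmt10 (k : ℕ) (hk : 1 ≤ k) (P Q : Finset ℝ) (hPQ : Disjoint P Q)
    (hP : P.card = k + 1) (hQ : Q.card = k + 1) (halt : ¬ Alternates P Q) :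
    (∃ (n : Fin (2 * k) → ℝ) (c : ℝ), n ≠ 0 ∧
      (∀ x ∈ convexHull ℝ (moment (2 * k) '' (P : Set ℝ)), ∑ i, n i * x i < c) ∧
      (∀ y ∈ convexHull ℝ (moment (2 * k) '' (Q : Set ℝ)), c < ∑ i, n i * y i)) ∧
    convexHull ℝ (moment (2 * k) '' (P : Set ℝ)) ∩
      convexHull ℝ (moment (2 * k) '' (Q : Set ℝ)) = ∅ := by
  classical
  have hUcard : (P ∪ Q).card = 2*k+2 := by
    rw [Finset.card_union_of_disjoint hPQ, hP, hQ]; ring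
  set e := (P ∪ Q).orderIsoOfFin hUcard with he
  set w : Fin (2*k+2) → ℝ := fun i => (e i : ℝ) with hwdef
  have hw : StrictMono w := fun a b hab => Subtype.coe_lt_coe.2 (e.lt_iff_lt.2 hab)
  have hU : ∀ j, w j ∈ P ∪ Q := fun j => (e j).2
  have hsurj : ∀ a ∈ P ∪ Q, ∃ j, w j = a := fun a ha =>
    ⟨e.symm ⟨a, ha⟩, by simp [hwdef]⟩
  have hQiff : ∀ j, w j ∈ Q ↔ ¬ w j ∈ P := by
    intro j
    rcases Finset.mem_union.1 (hU j) with h | h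
    · simp [h, Finset.disjoint_left.1 hPQ h]
    · simp [h, Finset.disjoint_right.1 hPQ h]
  set Cr : Finset (Fin (2*k+1)) :=
    Finset.univ.filter (fun i => ¬(w i.castSucc ∈ P ↔ w i.succ ∈ P)) with hCr
  have hCmem : ∀ i, i ∈ Cr ↔ ¬(w i.castSucc ∈ P ↔ w i.succ ∈ P) := by
    intro i
    rw [hCr, Finset.mem_filter]
    exact ⟨fun h => h.2, fun h => ⟨Finset.mem_univ i, h⟩⟩
  obtain ⟨i₀, hi₀⟩ : ∃ i : Fin (2*k+1), (w i.castSucc ∈ P ↔ w i.succ ∈ P) := by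
    by_contra h
    exact halt (aux_alt k P Q hPQ hP hQ w hw hU (fun i hiff => h ⟨i, hiff⟩))
  have hCcard : Cr.card ≤ 2*k := by
    have hsub : Cr ⊆ Finset.univ.erase i₀ := fun i hi =>
      Finset.mem_erase.2 ⟨fun h => ((hCmem i).1 hi) (h ▸ hi₀), Finset.mem_univ i⟩
    calc Cr.card ≤ (Finset.univ.erase i₀).card := Finset.card_le_card hsub
      _ = 2*k := by
          rw [Finset.card_erase_of_mem (Finset.mem_univ _), Finset.card_univ]
          simp
  have hCne : Cr.Nonempty := by
    by_contra hne
    rw [Finset.not_nonempty_iff_eq_empty] at hne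
    have hconst : ∀ j (hj : j < 2*k+2), (w ⟨j,hj⟩ ∈ P ↔ w 0 ∈ P) := by
      intro j
      induction j with
      | zero =>
        intro hj
        rw [show (⟨0,hj⟩ : Fin (2*k+2)) = 0 from Fin.ext (by simp)]
      | succ j ih =>
        intro hj
        have hj' : j < 2*k+2 := by omega
        have hj1 : j < 2*k+1 := by omega
        have hnot : ¬ (⟨j,hj1⟩ : Fin (2*k+1)) ∈ Cr := by simp [hne]
        have hiff := not_not.1 (fun h => hnot ((hCmem ⟨j,hj1⟩).2 h))
        have hcs : (⟨j, hj1⟩ : Fin (2*k+1)).castSucc = ⟨j, hj'⟩ := rfl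
        have hsu : (⟨j, hj1⟩ : Fin (2*k+1)).succ = ⟨j+1, hj⟩ := rfl
        rw [hcs, hsu] at hiff
        rw [← hiff]
        exact ih hj'
    have hconst' : ∀ j : Fin (2*k+2), w j ∈ P ↔ w 0 ∈ P := fun j => by
      have := hconst j j.2; rwa [Fin.eta] at this
    obtain ⟨a, ha⟩ := Finset.card_pos.1 (by rw [hP]; omega : 0 < P.card)
    obtain ⟨b, hb⟩ := Finset.card_pos.1 (by rw [hQ]; omega : 0 < Q.card)
    obtain ⟨j₁, rfl⟩ := hsurj a (Finset.mem_union_left _ ha)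
    obtain ⟨j₂, rfl⟩ := hsurj b (Finset.mem_union_right _ hb)
    have h1 := (hconst' j₁).1 ha
    have h2 := (hQiff j₂).1 hb
    exact h2 ((hconst' j₂).2 h1)
  -- midpoints
  set z : Fin (2*k+1) → ℝ := fun i => (w i.castSucc + w i.succ)/2 with hz
  have hzlt : ∀ (i : Fin (2*k+1)) (j : Fin (2*k+2)), (i:ℕ) < (j:ℕ) → z i < w j := by
    intro i j hij
    have h1 : w i.castSucc < w i.succ := hw Fin.castSucc_lt_succ
    have h2 : w i.succ ≤ w j := hw.monotone (by rw [Fin.le_def, Fin.val_succ]; omega)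
    have : z i < w i.succ := by rw [hz]; simp only; linarith
    linarith
  have hzgt : ∀ (i : Fin (2*k+1)) (j : Fin (2*k+2)), (j:ℕ) ≤ (i:ℕ) → w j < z i := by
    intro i j hij
    have h1 : w i.castSucc < w i.succ := hw Fin.castSucc_lt_succ
    have h2 : w j ≤ w i.castSucc := hw.monotone (by rw [Fin.le_def, Fin.coe_castSucc]; omega)
    have : w i.castSucc < z i := by rw [hz]; simp only; linarith
    linarith
  -- counting function
  set N : ℕ → ℕ := fun j => (Cr.filter (fun i : Fin (2*k+1) => (i:ℕ) < j)).card with hNdef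
  have hN0 : N 0 = 0 := by simp [hNdef]
  have hNstep : ∀ j (hj1 : j < 2*k+1),
      N (j+1) = N j + if (⟨j,hj1⟩ : Fin (2*k+1)) ∈ Cr then 1 else 0 := by
    intro j hj1
    have hsplit : Cr.filter (fun i : Fin (2*k+1) => (i:ℕ) < j+1)
        = Cr.filter (fun i : Fin (2*k+1) => (i:ℕ) < j) ∪ Cr.filter (fun i => i = (⟨j,hj1⟩ : Fin (2*k+1))) := by
      ext i
      simp only [Finset.mem_filter, Finset.mem_union, Fin.ext_iff]
      have : (i:ℕ) < j+1 ↔ ((i:ℕ) < j ∨ (i:ℕ) = j) := by omega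
      tauto
    have hdisj : Disjoint (Cr.filter (fun i : Fin (2*k+1) => (i:ℕ) < j))
        (Cr.filter (fun i => i = (⟨j,hj1⟩ : Fin (2*k+1)))) := by
      rw [Finset.disjoint_left]
      intro x hx1 hx2
      have h1 := (Finset.mem_filter.1 hx1).2
      have h2 := (Finset.mem_filter.1 hx2).2
      rw [h2] at h1
      simp at h1
    have hcard2 : (Cr.filter (fun i => i = (⟨j,hj1⟩ : Fin (2*k+1)))).card
        = if (⟨j,hj1⟩ : Fin (2*k+1)) ∈ Cr then 1 else 0 := by
      rw [Finset.filter_eq' Cr ⟨j,hj1⟩]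
      split_ifs <;> simp
    rw [hNdef]
    simp only
    rw [hsplit, Finset.card_union_of_disjoint hdisj, hcard2]
  -- parity
  have hpar : ∀ j (hj : j < 2*k+2), ((w ⟨j,hj⟩ ∈ P ↔ w 0 ∈ P) ↔ Even (N j)) := by
    intro j
    induction j with
    | zero =>
      intro hj
      rw [show (⟨0,hj⟩ : Fin (2*k+2)) = 0 from Fin.ext (by simp)]
      simp [hN0]
    | succ j ih =>
      intro hj
      have hj' : j < 2*k+2 := by omega
      have hj1 : j < 2*k+1 := by omega
      have hstep := hNstep j hj1
      have hmem := hCmem ⟨j,hj1⟩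
      have hcs : (⟨j, hj1⟩ : Fin (2*k+1)).castSucc = ⟨j, hj'⟩ := rfl
      have hsu : (⟨j, hj1⟩ : Fin (2*k+1)).succ = ⟨j+1, hj⟩ := rfl
      rw [hcs, hsu] at hmem
      have ihj := ih hj'
      by_cases hc : (⟨j,hj1⟩ : Fin (2*k+1)) ∈ Cr
      · have hlbl := hmem.1 hc
        rw [hstep, if_pos hc, Nat.even_add_one]
        revert ihj hlbl
        generalize (w ⟨j,hj'⟩ ∈ P) = a
        generalize (w ⟨j+1,hj⟩ ∈ P) = a'
        generalize (w 0 ∈ P) = c'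
        generalize Even (N j) = d'
        clear * - 
        tauto
      · have hlbl : (w ⟨j,hj'⟩ ∈ P ↔ w ⟨j+1,hj⟩ ∈ P) := not_not.1 (fun h => hc (hmem.2 h))
        rw [hstep, if_neg hc]
        simp only [Nat.add_zero]
        revert ihj hlbl
        generalize (w ⟨j,hj'⟩ ∈ P) = a
        generalize (w ⟨j+1,hj⟩ ∈ P) = a'
        generalize (w 0 ∈ P) = c'
        generalize Even (N j) = d'
        clear * - 
        tauto
  set b : ℕ := if w 0 ∈ P then 1 else 0 with hb
  have hparP : ∀ j : Fin (2*k+2), w j ∈ P → Odd (N (j:ℕ) + b) := by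
    intro j hj
    have hp := hpar j j.2
    rw [Fin.eta] at hp
    by_cases h0 : w 0 ∈ P
    · have : Even (N (j:ℕ)) := hp.1 (by tauto)
      rw [hb, if_pos h0]
      rw [Nat.even_iff] at this; rw [Nat.odd_iff]; omega
    · have : ¬ Even (N (j:ℕ)) := fun h => h0 ((hp.2 h).1 hj)
      rw [hb, if_neg h0]
      rw [Nat.even_iff] at this; rw [Nat.odd_iff]; omega
  have hparQ : ∀ j : Fin (2*k+2), w j ∈ Q → Even (N (j:ℕ) + b) := by
    intro j hj
    have hjP : ¬ w j ∈ P := (hQiff j).1 hj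
    have hp := hpar j j.2
    rw [Fin.eta] at hp
    by_cases h0 : w 0 ∈ P
    · have : ¬ Even (N (j:ℕ)) := fun h => hjP ((hp.2 h).2 h0)
      rw [hb, if_pos h0]
      rw [Nat.even_iff] at this ⊢; omega
    · have : Even (N (j:ℕ)) := hp.1 (by tauto)
      rw [hb, if_neg h0]
      rw [Nat.even_iff] at this ⊢; omega
  -- the polynomial
  set ε : ℝ := (-1)^(Cr.card + b) with hepsdef
  have hε : ε ≠ 0 := pow_ne_zero _ (by norm_num)
  set p : Polynomial ℝ := Polynomial.C ε * ∏ i ∈ Cr, (Polynomial.X - Polynomial.C (z i))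
    with hpdef
  have hprodnd : (∏ i ∈ Cr, (Polynomial.X - Polynomial.C (z i))).natDegree = Cr.card := by
    rw [Polynomial.natDegree_prod _ _ (fun i _ => Polynomial.X_sub_C_ne_zero (z i))]
    simp [Polynomial.natDegree_X_sub_C]
  have hdeg : p.natDegree = Cr.card := by
    rw [hpdef, Polynomial.natDegree_C_mul hε, hprodnd]
  have hmonic : (∏ i ∈ Cr, (Polynomial.X - Polynomial.C (z i))).Monic :=
    Polynomial.monic_prod_of_monic _ _ (fun i _ => Polynomial.monic_X_sub_C (z i))
  have hcoefftop : p.coeff Cr.card = ε := by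
    rw [hpdef, Polynomial.coeff_C_mul, ← hprodnd, hmonic.coeff_natDegree, mul_one]
  have heval : ∀ t, p.eval t = ε * ∏ i ∈ Cr, (t - z i) := by
    intro t
    rw [hpdef]
    simp [Polynomial.eval_prod]
  -- sign of eval at w j
  have hsign : ∀ j : Fin (2*k+2),
      (Odd (N (j:ℕ) + b) → p.eval (w j) < 0) ∧
      (Even (N (j:ℕ) + b) → 0 < p.eval (w j)) := by
    intro j
    set A := Cr.filter (fun i : Fin (2*k+1) => (i:ℕ) < (j:ℕ)) with hA
    set B := Cr.filter (fun i : Fin (2*k+1) => ¬((i:ℕ) < (j:ℕ))) with hB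
    have hAN : A.card = N (j:ℕ) := rfl
    have hcardAB : A.card + B.card = Cr.card :=
      Finset.card_filter_add_card_filter_not _
    have hprodA : 0 < ∏ i ∈ A, (w j - z i) := by
      apply Finset.prod_pos
      intro i hi
      exact sub_pos.2 (hzlt i j (Finset.mem_filter.1 hi).2)
    have hprodB : 0 < ∏ i ∈ B, (z i - w j) := by
      apply Finset.prod_pos
      intro i hi
      have := (Finset.mem_filter.1 hi).2
      exact sub_pos.2 (hzgt i j (by omega))
    have hBneg : ∏ i ∈ B, (w j - z i) = (-1)^B.card * ∏ i ∈ B, (z i - w j) := by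
      rw [← aux_prod_neg]
      exact Finset.prod_congr rfl (fun i _ => by ring)
    have hsplit : ∏ i ∈ Cr, (w j - z i)
        = (∏ i ∈ A, (w j - z i)) * (∏ i ∈ B, (w j - z i)) :=
      (Finset.prod_filter_mul_prod_filter_not Cr _ _).symm
    have heq : p.eval (w j)
        = (-1)^(Cr.card + b + B.card) * ((∏ i ∈ A, (w j - z i)) * ∏ i ∈ B, (z i - w j)) := by
      rw [heval, hsplit, hBneg, hepsdef, pow_add]
      ring
    have hpos : 0 < (∏ i ∈ A, (w j - z i)) * ∏ i ∈ B, (z i - w j) :=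
      mul_pos hprodA hprodB
    constructor
    · intro hodd
      have ho : Odd (Cr.card + b + B.card) := by
        simp only [Nat.odd_iff] at hodd ⊢
        omega
      rw [heq, ho.neg_one_pow]
      nlinarith
    · intro heven
      have ho : Even (Cr.card + b + B.card) := by
        simp only [Nat.even_iff] at heven ⊢
        omega
      rw [heq, ho.neg_one_pow, one_mul]
      exact hpos
  -- the separating functional
  set nv : Fin (2*k) → ℝ := fun i => p.coeff ((i:ℕ)+1) with hnvdef
  set c : ℝ := -p.coeff 0 with hcdef
  have hCpos : 1 ≤ Cr.card := hCne.card_pos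
  have hnv : nv ≠ 0 := by
    intro h
    have h1 : Cr.card - 1 < 2*k := by omega
    have h2 := congrFun h ⟨Cr.card - 1, h1⟩
    rw [hnvdef] at h2
    simp only [Pi.zero_apply] at h2
    rw [show (Cr.card - 1) + 1 = Cr.card from by omega] at h2
    rw [hcoefftop] at h2
    exact hε h2
  have hsum : ∀ t, ∑ i, nv i * (moment (2*k) t) i = p.eval t - p.coeff 0 := by
    intro t
    rw [Polynomial.eval_eq_sum_range' (n := 2*k+1) (by omega) t]
    rw [Finset.sum_range_succ']
    simp only [pow_zero, mul_one]
    rw [← Fin.sum_univ_eq_sum_range (fun i => p.coeff (i+1) * t^(i+1)) (2*k)]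
    simp only [hnvdef, moment]
    ring
  have hlt : ∀ x ∈ convexHull ℝ (moment (2 * k) '' (P : Set ℝ)), ∑ i, nv i * x i < c := by
    apply aux_hull_lt
    rintro x ⟨t, htP, rfl⟩
    obtain ⟨j, rfl⟩ := hsurj t (Finset.mem_union_left _ htP)
    rw [hsum]
    have := (hsign j).1 (hparP j htP)
    rw [hcdef]
    linarith
  have hgt : ∀ x ∈ convexHull ℝ (moment (2 * k) '' (Q : Set ℝ)), c < ∑ i, nv i * x i := by
    apply aux_hull_gt
    rintro x ⟨t, htQ, rfl⟩
    obtain ⟨j, rfl⟩ := hsurj t (Finset.mem_union_right _ htQ)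
    rw [hsum]
    have := (hsign j).2 (hparQ j htQ)
    rw [hcdef]
    linarith
  refine ⟨⟨nv, c, hnv, hlt, hgt⟩, ?_⟩
  ext x
  simp only [Set.mem_inter_iff, Set.mem_empty_iff_false, iff_false]
  rintro ⟨hx1, hx2⟩
  exact absurd (hlt x hx1) (not_lt.2 (le_of_lt (hgt x hx2)))
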